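/- Let A_1, …, A_M be real n×n matrices with A := A_1 Hurwitz, D_j := A_j − A_1, and B_1, …, B_M real n×m matrices. Define P_1 as the unique symmetric positive semidefinite solution of A·P_1 + P_1·Aᵀ + ∑_{j=1}^{M} B_j·B_jᵀ = 0 and, for k ≥ 2, P_k as the unique symmetric positive semidefinite solution of A·P_k + P_k·Aᵀ + ∑_{j=1}^{M} D_j·P_{k−1}·D_jᵀ = 0. If the series ∑_{k≥1} P_k is summable with sum P, then the range of P equals the reachability subspace R, i.e. the span of all columns of matrices of the form M_s ⋯ M_1 · B_{i_0}, where s ≥ 0, each M_t ∈ {A_1, …, A_M}, i_0 ∈ {1,…,M}, and the empty product is the identity matrix. -/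

import Mathlib

open Matrix

/-- A real square matrix is Hurwitz if every eigenvalue of it, viewed as a complex
matrix, has strictly negative real part. -/
def IsHurwitz {n : ℕ} (A : Matrix (Fin n) (Fin n) ℝ) : Prop :=
  ∀ μ ∈ spectrum ℂ (A.map (algebraMap ℝ ℂ)), μ.re < 0

namespace RGERS

open Polynomial

lemma root_charpoly_mem_spectrum {n : ℕ} {N : Matrix (Fin n) (Fin n) ℂ} {μ : ℂ}
    (h : N.charpoly.IsRoot μ) : μ ∈ spectrum ℂ N := by
  rw [spectrum.mem_iff]
  intro hu
  rw [Matrix.isUnit_iff_isUnit_det, isUnit_iff_ne_zero] at hu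
  apply hu
  have : N.charpoly.eval μ = (algebraMap ℂ (Matrix (Fin n) (Fin n) ℂ) μ - N).det := by
    rw [Matrix.charpoly, _root_.eval_det, Matrix.matPolyEquiv_charmatrix,
      Matrix.algebraMap_eq_diagonal]
    simp [Matrix.scalar]
  rw [← this]; exact h

lemma hurwitz_coprime {n : ℕ} {A : Matrix (Fin n) (Fin n) ℝ} (hA : IsHurwitz A) :
    IsCoprime A.charpoly (A.charpoly.comp (-X)) := by
  rw [← Polynomial.isCoprime_map (algebraMap ℝ ℂ)]
  classical
  rw [← EuclideanDomain.gcd_isUnit_iff]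
  by_contra hg
  set p := A.charpoly.map (algebraMap ℝ ℂ) with hp
  set q := (A.charpoly.comp (-X)).map (algebraMap ℝ ℂ) with hq
  have hp' : p = (A.map (algebraMap ℝ ℂ)).charpoly := (Matrix.charpoly_map A _).symm
  have hpd : p ≠ 0 := by rw [hp']; exact (Matrix.charpoly_monic _).ne_zero
  have hgne : EuclideanDomain.gcd p q ≠ 0 := fun h0 =>
    hpd (EuclideanDomain.gcd_eq_zero_iff.mp h0).1
  obtain ⟨μ, hμ⟩ := Complex.exists_root (degree_pos_of_ne_zero_of_nonunit hgne hg)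
  have h1 : p.IsRoot μ :=
    eval_eq_zero_of_dvd_of_eval_eq_zero (EuclideanDomain.gcd_dvd_left p q) hμ
  have h2 : q.IsRoot μ :=
    eval_eq_zero_of_dvd_of_eval_eq_zero (EuclideanDomain.gcd_dvd_right p q) hμ
  have h2' : p.IsRoot (-μ) := by
    rw [hq, Polynomial.map_comp] at h2
    simp only [Polynomial.map_neg, Polynomial.map_X, IsRoot, eval_comp, eval_neg, eval_X] at h2
    exact h2
  have hs1 : μ.re < 0 := hA μ (root_charpoly_mem_spectrum (hp' ▸ h1))
  have hs2 : (-μ).re < 0 := hA (-μ) (root_charpoly_mem_spectrum (hp' ▸ h2'))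
  simp at hs2; linarith

lemma pow_mul_eq {n : ℕ} {A X : Matrix (Fin n) (Fin n) ℝ} (h : A * X = -(X * Aᵀ)) :
    ∀ k : ℕ, A ^ k * X = X * (-Aᵀ) ^ k := by
  intro k
  induction k with
  | zero => simp
  | succ k ih =>
    rw [pow_succ', mul_assoc, ih, ← mul_assoc, h, pow_succ', neg_mul, ← mul_assoc,
      mul_neg, neg_mul]

lemma aeval_mul_eq {n : ℕ} {A X : Matrix (Fin n) (Fin n) ℝ} (h : A * X = -(X * Aᵀ))
    (r : ℝ[X]) : (aeval A r) * X = X * aeval Aᵀ (r.comp (-Polynomial.X)) := by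
  induction r using Polynomial.induction_on' with
  | add p q hp hq => rw [map_add, add_comp, map_add, add_mul, mul_add, hp, hq]
  | monomial k a =>
    rw [aeval_monomial, ← C_mul_X_pow_eq_monomial, mul_comp, C_comp, X_pow_comp,
      _root_.map_mul, aeval_C, map_pow, map_neg, aeval_X,
      mul_assoc, pow_mul_eq h k, ← mul_assoc, Algebra.commutes a X, mul_assoc]

lemma aeval_transpose {n : ℕ} (A : Matrix (Fin n) (Fin n) ℝ) (r : ℝ[X]) :
    (aeval A r)ᵀ = aeval Aᵀ r := by
  induction r using Polynomial.induction_on' with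
  | add p q hp hq => rw [map_add, transpose_add, hp, hq, map_add]
  | monomial k a =>
    rw [aeval_monomial, aeval_monomial, transpose_mul, transpose_pow]
    rw [Matrix.algebraMap_eq_diagonal, diagonal_transpose, ← Matrix.algebraMap_eq_diagonal,
      ← Algebra.commutes]

lemma lyap_injective {n : ℕ} {A : Matrix (Fin n) (Fin n) ℝ} (hA : IsHurwitz A)
    (X : Matrix (Fin n) (Fin n) ℝ) (h : A * X + X * Aᵀ = 0) : X = 0 := by
  have h' : A * X = -(X * Aᵀ) := eq_neg_of_add_eq_zero_left h
  set p := A.charpoly with hp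
  set q := p.comp (-Polynomial.X) with hq
  have key : X * aeval Aᵀ q = 0 := by
    rw [← aeval_mul_eq h' p, Matrix.aeval_self_charpoly, zero_mul]
  have hpT : aeval Aᵀ p = 0 := by
    rw [← aeval_transpose, Matrix.aeval_self_charpoly, transpose_zero]
  obtain ⟨a, b, hab⟩ := hurwitz_coprime hA
  have := congrArg (aeval Aᵀ) hab
  rw [map_add, _root_.map_mul, _root_.map_mul, _root_.map_one, hpT, mul_zero, zero_add] at this
  calc X = X * (aeval Aᵀ b * aeval Aᵀ q) := by rw [this, mul_one]
    _ = X * aeval Aᵀ q * aeval Aᵀ b := by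
        rw [← _root_.map_mul, mul_comm b q, _root_.map_mul, mul_assoc]
    _ = 0 := by rw [key, zero_mul]

lemma pow_mulVec_mem {n : ℕ} {A : Matrix (Fin n) (Fin n) ℝ} {V : Submodule ℝ (Fin n → ℝ)}
    (hAV : ∀ v ∈ V, A.mulVec v ∈ V) (j : ℕ) {v : Fin n → ℝ} (hv : v ∈ V) :
    (A ^ j).mulVec v ∈ V := by
  induction j with
  | zero => simpa using hv
  | succ j ih => rw [pow_succ', ← Matrix.mulVec_mulVec]; exact hAV _ ih

lemma solution_range {n : ℕ} {A Xm Q : Matrix (Fin n) (Fin n) ℝ} (hA : IsHurwitz A)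
    (heq : A * Xm + Xm * Aᵀ + Q = 0)
    (V : Submodule ℝ (Fin n → ℝ))
    (hAV : ∀ v ∈ V, A.mulVec v ∈ V)
    (hQV : ∀ x, Q.mulVec x ∈ V) :
    ∀ x, Xm.mulVec x ∈ V := by
  classical
  set T : Set (Matrix (Fin n) (Fin n) ℝ) := {Y | ∃ j k : ℕ, Y = A ^ j * Q * (Aᵀ) ^ k} with hT
  set W : Submodule ℝ (Matrix (Fin n) (Fin n) ℝ) := Submodule.span ℝ T with hW
  set L : Matrix (Fin n) (Fin n) ℝ →ₗ[ℝ] Matrix (Fin n) (Fin n) ℝ :=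
    LinearMap.mulLeft ℝ A + LinearMap.mulRight ℝ Aᵀ with hL
  have hLapp : ∀ Y, L Y = A * Y + Y * Aᵀ := fun Y => rfl
  have hinj : Function.Injective L := by
    rw [← LinearMap.ker_eq_bot, LinearMap.ker_eq_bot']
    intro Y hY
    exact lyap_injective hA Y (by rw [← hLapp]; exact hY)
  have hLW : ∀ Y ∈ W, L Y ∈ W := by
    intro Y hY
    induction hY using Submodule.span_induction with
    | mem Y hY =>
      obtain ⟨j, k, rfl⟩ := hY
      rw [hLapp]
      apply Submodule.add_mem
      · apply Submodule.subset_span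
        exact ⟨j + 1, k, by rw [pow_succ']; noncomm_ring⟩
      · apply Submodule.subset_span
        exact ⟨j, k + 1, by rw [pow_succ]; noncomm_ring⟩
    | zero => rw [map_zero]; exact W.zero_mem
    | add x y hx hy ihx ihy => rw [map_add]; exact W.add_mem ihx ihy
    | smul a x hx ihx => rw [LinearMap.map_smul]; exact W.smul_mem a ihx
  set L' : W →ₗ[ℝ] W := L.restrict hLW with hL'
  have hinj' : Function.Injective L' := fun x y hxy =>
    Subtype.ext (hinj (by simpa [L', LinearMap.restrict_apply, Subtype.ext_iff] using hxy))
  have hsurj : Function.Surjective L' := LinearMap.injective_iff_surjective.mp hinj'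
  have hQW : Q ∈ W := Submodule.subset_span ⟨0, 0, by simp⟩
  obtain ⟨Y₀, hY₀⟩ := hsurj ⟨-Q, W.neg_mem hQW⟩
  have hY₀' : L (Y₀ : Matrix (Fin n) (Fin n) ℝ) = -Q := by
    have := congrArg (Subtype.val) hY₀
    simpa [L', LinearMap.restrict_apply] using this
  have hXm : Xm = (Y₀ : Matrix (Fin n) (Fin n) ℝ) := by
    apply hinj
    rw [hY₀', hLapp]
    exact eq_neg_of_add_eq_zero_left heq
  have hXW : Xm ∈ W := hXm ▸ Y₀.2
  have hmem : ∀ Y ∈ W, ∀ x, Y.mulVec x ∈ V := by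
    intro Y hY
    induction hY using Submodule.span_induction with
    | mem Y hY =>
      obtain ⟨j, k, rfl⟩ := hY
      intro x
      rw [← Matrix.mulVec_mulVec, ← Matrix.mulVec_mulVec]
      exact pow_mulVec_mem hAV j (hQV _)
    | zero => intro x; simp only [Matrix.zero_mulVec]; exact V.zero_mem
    | add y z hy hz ihy ihz =>
      intro x
      rw [Matrix.add_mulVec]; exact V.add_mem (ihy x) (ihz x)
    | smul a y hy ihy =>
      intro x
      rw [Matrix.smul_mulVec]; exact V.smul_mem a (ihy x)
  exact hmem Xm hXW

lemma range_le_of_ker {n m : ℕ} {S : Matrix (Fin n) (Fin n) ℝ} (hS : Sᵀ = S)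
    {Y : Matrix (Fin n) (Fin m) ℝ}
    (h : ∀ x, S.mulVec x = 0 → Yᵀ.mulVec x = 0) :
    ∀ u, Y.mulVec u ∈ LinearMap.range S.mulVecLin := by
  set g := S.mulVecLin with hg
  set f := Yᵀ.mulVecLin with hf
  have hker : LinearMap.ker g ≤ LinearMap.ker f := by
    intro x hx
    rw [LinearMap.mem_ker] at hx ⊢
    exact h x hx
  set ψ := Submodule.liftQ (LinearMap.ker g) f hker with hψ
  set e := LinearMap.quotKerEquivRange g with he
  obtain ⟨Wmap, hWmap⟩ := LinearMap.exists_extend (ψ.comp (e.symm : LinearMap.range g →ₗ[ℝ] _))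
  have hfact : ∀ x, Wmap (g x) = f x := by
    intro x
    have h1 : (⟨g x, LinearMap.mem_range_self g x⟩ : LinearMap.range g)
        = e (Submodule.Quotient.mk x) := rfl
    have h2 : Wmap (g x) = (ψ.comp (e.symm : LinearMap.range g →ₗ[ℝ] _))
        ⟨g x, LinearMap.mem_range_self g x⟩ := by
      rw [← hWmap]; rfl
    rw [h2, LinearMap.comp_apply, h1]
    simp only [LinearEquiv.coe_coe, LinearEquiv.symm_apply_apply]
    rfl
  set Z := LinearMap.toMatrix' Wmap with hZ
  have hZS : Z * S = Yᵀ := by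
    apply (LinearMap.toMatrix'.symm.injective)
    change Matrix.toLin' (Z * S) = Matrix.toLin' Yᵀ
    rw [Matrix.toLin'_mul]
    apply LinearMap.ext
    intro x
    rw [LinearMap.comp_apply]
    have : Matrix.toLin' Z = Wmap := by rw [hZ, Matrix.toLin'_toMatrix']
    rw [this, Matrix.toLin'_apply', Matrix.toLin'_apply', Matrix.mulVecLin_apply,
      Matrix.mulVecLin_apply]
    exact hfact x
  have hY : Y = S * Zᵀ := by
    have := congrArg Matrix.transpose hZS
    rw [Matrix.transpose_mul, hS, Matrix.transpose_transpose] at this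
    exact this.symm
  intro u
  rw [hY, ← Matrix.mulVec_mulVec]
  exact LinearMap.mem_range_self g _

/-- matrix-to-vector application as a linear map in the matrix argument -/
def mulVecRev {n m : ℕ} (x : Fin m → ℝ) : Matrix (Fin n) (Fin m) ℝ →ₗ[ℝ] (Fin n → ℝ) where
  toFun X := X.mulVec x
  map_add' X Y := Matrix.add_mulVec X Y x
  map_smul' a X := Matrix.smul_mulVec a X x

lemma sum_mulVec {n m M : ℕ} (f : Fin M → Matrix (Fin n) (Fin m) ℝ) (x : Fin m → ℝ) :
    (∑ j : Fin M, f j).mulVec x = ∑ j : Fin M, (f j).mulVec x :=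
  map_sum (mulVecRev x) f Finset.univ

lemma vecMul_symm {n : ℕ} {Pm : Matrix (Fin n) (Fin n) ℝ} (h : Pmᵀ = Pm) (x : Fin n → ℝ) :
    x ᵥ* Pm = Pm.mulVec x := by
  conv_lhs => rw [← h]
  rw [Matrix.vecMul_transpose]

lemma vecMul_eq_transpose_mulVec {n m : ℕ} (Y : Matrix (Fin n) (Fin m) ℝ) (x : Fin n → ℝ) :
    x ᵥ* Y = Yᵀ.mulVec x := by
  conv_lhs => rw [← Matrix.transpose_transpose Y]
  rw [Matrix.vecMul_transpose]

lemma quadAux {n : ℕ} {Am Pm Qm : Matrix (Fin n) (Fin n) ℝ}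
    (heq : Am * Pm + Pm * Amᵀ + Qm = 0) (hPs : Pmᵀ = Pm)
    {x : Fin n → ℝ} (hx : Pm.mulVec x = 0) :
    x ⬝ᵥ Qm.mulVec x = 0 ∧ Pm.mulVec (Amᵀ.mulVec x) = -(Qm.mulVec x) := by
  have h1 : (Am * Pm).mulVec x = 0 := by
    rw [← Matrix.mulVec_mulVec, hx, Matrix.mulVec_zero]
  have h2 : x ᵥ* Pm = 0 := by rw [vecMul_symm hPs, hx]
  have h3 : x ⬝ᵥ (Pm * Amᵀ).mulVec x = 0 := by
    rw [Matrix.dotProduct_mulVec, ← Matrix.vecMul_vecMul, h2, Matrix.zero_vecMul,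
      zero_dotProduct]
  constructor
  · have h0 := congrArg (fun Mt : Matrix (Fin n) (Fin n) ℝ => x ⬝ᵥ Mt.mulVec x) heq
    simp only [Matrix.add_mulVec, dotProduct_add, Matrix.zero_mulVec,
      dotProduct_zero, h1, h3] at h0
    linarith
  · have h4 := congrArg (fun Mt : Matrix (Fin n) (Fin n) ℝ => Mt.mulVec x) heq
    simp only [Matrix.add_mulVec, Matrix.zero_mulVec] at h4
    rw [h1, zero_add] at h4
    rw [Matrix.mulVec_mulVec]
    exact eq_neg_of_add_eq_zero_left h4

lemma dot_self_nonneg {n : ℕ} (v : Fin n → ℝ) : 0 ≤ v ⬝ᵥ v :=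
  Finset.sum_nonneg fun i _ => mul_self_nonneg (v i)

/-- dot product with a fixed vector, as a linear map -/
def dotLin {n : ℕ} (x : Fin n → ℝ) : (Fin n → ℝ) →ₗ[ℝ] ℝ where
  toFun v := x ⬝ᵥ v
  map_add' a b := dotProduct_add x a b
  map_smul' a v := dotProduct_smul a x v

lemma dot_sum {n M : ℕ} (x : Fin n → ℝ) (f : Fin M → (Fin n → ℝ)) :
    x ⬝ᵥ (∑ j : Fin M, f j) = ∑ j : Fin M, x ⬝ᵥ f j :=
  map_sum (dotLin x) f Finset.univ

end RGERS

open RGERS in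
theorem range_gramian_eq_reachability_subspace
    {n m M : ℕ} (hM : 0 < M)
    (A : Fin M → Matrix (Fin n) (Fin n) ℝ)
    (B : Fin M → Matrix (Fin n) (Fin m) ℝ)
    (hA : IsHurwitz (A ⟨0, hM⟩))
    (D : Fin M → Matrix (Fin n) (Fin n) ℝ)
    (hD : ∀ j, D j = A j - A ⟨0, hM⟩)
    (P : ℕ → Matrix (Fin n) (Fin n) ℝ)
    -- `P 0` plays the role of `P₁`, etc.
    (hP1psd : (P 0).PosSemidef)
    (hP1 : A ⟨0, hM⟩ * P 0 + P 0 * (A ⟨0, hM⟩)ᵀ + ∑ j : Fin M, B j * (B j)ᵀ = 0)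
    (hPkpsd : ∀ k : ℕ, (P (k + 1)).PosSemidef)
    (hPk : ∀ k : ℕ,
      A ⟨0, hM⟩ * P (k + 1) + P (k + 1) * (A ⟨0, hM⟩)ᵀ +
        ∑ j : Fin M, D j * P k * (D j)ᵀ = 0)
    (S : Matrix (Fin n) (Fin n) ℝ) (hS : HasSum P S)
    -- the reachability subspace
    (R : Submodule ℝ (Fin n → ℝ))
    (hR : R = ⨆ (L : List (Matrix (Fin n) (Fin n) ℝ))
        (_ : ∀ X ∈ L, X ∈ Set.range A) (i : Fin M),
        LinearMap.range ((L.prod * B i).mulVecLin)) :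
    LinearMap.range S.mulVecLin = R := by
  classical
  set A0 := A ⟨0, hM⟩ with hA0
  have hpsd : ∀ k, (P k).PosSemidef := fun k => by
    cases k with
    | zero => exact hP1psd
    | succ k => exact hPkpsd k
  have hPsymm : ∀ k, (P k)ᵀ = P k := fun k => by
    have := (hpsd k).isHermitian
    rwa [Matrix.IsHermitian, Matrix.conjTranspose_eq_transpose_of_trivial] at this
  -- pointwise summability
  have hSx : ∀ x : Fin n → ℝ, HasSum (fun k => (P k).mulVec x) (S.mulVec x) := fun x =>
    hS.mapL (LinearMap.toContinuousLinearMap (mulVecRev x))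
  -- symmetry of S
  have hSsymm : Sᵀ = S := by
    have h1 : HasSum (fun k => (P k)ᵀ) Sᵀ :=
      hS.mapL (LinearMap.toContinuousLinearMap
        ((Matrix.transposeLinearEquiv (Fin n) (Fin n) ℝ ℝ).toLinearMap))
    have h2 : HasSum P Sᵀ := by
      have : (fun k => (P k)ᵀ) = P := funext fun k => hPsymm k
      rwa [this] at h1
    exact h2.unique hS
  -- kernel characterization
  have hKP : ∀ x, S.mulVec x = 0 → ∀ k, (P k).mulVec x = 0 := by
    intro x hx k
    have hq : HasSum (fun k => x ⬝ᵥ (P k).mulVec x) 0 := by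
      have hd := (hSx x).mapL (LinearMap.toContinuousLinearMap (dotLin x))
      simp only [LinearMap.coe_toContinuousLinearMap', dotLin, LinearMap.coe_mk,
        AddHom.coe_mk, hx, dotProduct_zero] at hd
      exact hd
    have hnn : ∀ j, 0 ≤ x ⬝ᵥ (P j).mulVec x := fun j => by
      simpa using (hpsd j).dotProduct_mulVec_nonneg x
    have hz : x ⬝ᵥ (P k).mulVec x = 0 :=
      le_antisymm (le_hasSum hq k fun j _ => hnn j) (hnn k)
    have := (hpsd k).dotProduct_mulVec_zero_iff x
    simp only [star_trivial] at this
    exact this.mp hz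
  have hPK : ∀ x, (∀ k, (P k).mulVec x = 0) → S.mulVec x = 0 := by
    intro x hx
    have h0 : HasSum (fun _ : ℕ => (0 : Fin n → ℝ)) (S.mulVec x) := by
      have := hSx x
      rwa [funext hx] at this
    exact (h0.unique hasSum_zero)
  -- quadratic consequences on the kernel
  have hKB : ∀ x, (∀ k, (P k).mulVec x = 0) → ∀ j, (B j)ᵀ.mulVec x = 0 := by
    intro x hx j
    have h0 := (quadAux hP1 (hPsymm 0) (hx 0)).1
    rw [RGERS.sum_mulVec, dot_sum] at h0
    have hterm : ∀ i : Fin M, x ⬝ᵥ (B i * (B i)ᵀ).mulVec x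
        = ((B i)ᵀ.mulVec x) ⬝ᵥ ((B i)ᵀ.mulVec x) := fun i => by
      rw [← Matrix.mulVec_mulVec, Matrix.dotProduct_mulVec, vecMul_eq_transpose_mulVec]
    rw [Finset.sum_congr rfl (fun i _ => hterm i)] at h0
    have hz : ((B j)ᵀ.mulVec x) ⬝ᵥ ((B j)ᵀ.mulVec x) = 0 :=
      (Finset.sum_eq_zero_iff_of_nonneg (fun i _ => dot_self_nonneg _)).mp h0 j (by simp)
    exact dotProduct_self_eq_zero.mp hz
  have hKD : ∀ x, (∀ k, (P k).mulVec x = 0) → ∀ j k, (P k).mulVec ((D j)ᵀ.mulVec x) = 0 := by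
    intro x hx j k
    have h0 := (quadAux (hPk k) (hPsymm (k + 1)) (hx (k + 1))).1
    rw [RGERS.sum_mulVec, dot_sum] at h0
    have hterm : ∀ i : Fin M, x ⬝ᵥ (D i * P k * (D i)ᵀ).mulVec x
        = ((D i)ᵀ.mulVec x) ⬝ᵥ (P k).mulVec ((D i)ᵀ.mulVec x) := fun i => by
      rw [← Matrix.mulVec_mulVec, ← Matrix.mulVec_mulVec, Matrix.dotProduct_mulVec,
        vecMul_eq_transpose_mulVec]
    rw [Finset.sum_congr rfl (fun i _ => hterm i)] at h0
    have hnn : ∀ i : Fin M, 0 ≤ ((D i)ᵀ.mulVec x) ⬝ᵥ (P k).mulVec ((D i)ᵀ.mulVec x) := fun i => by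
      simpa using (hpsd k).dotProduct_mulVec_nonneg ((D i)ᵀ.mulVec x)
    have hz := (Finset.sum_eq_zero_iff_of_nonneg (fun i _ => hnn i)).mp h0 j (by simp)
    have := (hpsd k).dotProduct_mulVec_zero_iff ((D j)ᵀ.mulVec x)
    simp only [star_trivial] at this
    exact this.mp hz
  have hKA0 : ∀ x, (∀ k, (P k).mulVec x = 0) → ∀ k, (P k).mulVec (A0ᵀ.mulVec x) = 0 := by
    intro x hx k
    cases k with
    | zero =>
      have h2 := (quadAux hP1 (hPsymm 0) (hx 0)).2
      rw [h2, RGERS.sum_mulVec]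
      have : ∀ i : Fin M, (B i * (B i)ᵀ).mulVec x = 0 := fun i => by
        rw [← Matrix.mulVec_mulVec, hKB x hx i, Matrix.mulVec_zero]
      rw [Finset.sum_congr rfl (fun i _ => this i)]
      simp
    | succ k =>
      have h2 := (quadAux (hPk k) (hPsymm (k + 1)) (hx (k + 1))).2
      rw [h2, RGERS.sum_mulVec]
      have : ∀ i : Fin M, (D i * P k * (D i)ᵀ).mulVec x = 0 := fun i => by
        rw [← Matrix.mulVec_mulVec, ← Matrix.mulVec_mulVec, hKD x hx i k, Matrix.mulVec_zero]
      rw [Finset.sum_congr rfl (fun i _ => this i)]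
      simp
  have hKAj : ∀ x, (∀ k, (P k).mulVec x = 0) → ∀ j k, (P k).mulVec ((A j)ᵀ.mulVec x) = 0 := by
    intro x hx j k
    have hAj : (A j)ᵀ = (D j)ᵀ + A0ᵀ := by
      rw [hD j, Matrix.transpose_sub]
      abel
    rw [hAj, Matrix.add_mulVec, Matrix.mulVec_add, hKD x hx j k, hKA0 x hx k, add_zero]
  -- closure of the kernel conditions under products from the list
  have hKprod : ∀ (Lst : List (Matrix (Fin n) (Fin n) ℝ)), (∀ X ∈ Lst, X ∈ Set.range A) →
      ∀ x, (∀ k, (P k).mulVec x = 0) → ∀ k, (P k).mulVec ((Lst.prod)ᵀ.mulVec x) = 0 := by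
    intro Lst
    induction Lst with
    | nil =>
      intro _ x hx k
      simpa [Matrix.transpose_one, Matrix.one_mulVec] using hx k
    | cons Mhd Ltl ih =>
      intro hmem x hx k
      obtain ⟨j, hj⟩ := hmem Mhd List.mem_cons_self
      have hx' : ∀ k, (P k).mulVec (Mhdᵀ.mulVec x) = 0 := by
        intro k'
        rw [← hj]
        exact hKAj x hx j k'
      have := ih (fun X hX => hmem X (List.mem_cons_of_mem _ hX)) (Mhdᵀ.mulVec x) hx' k
      rw [List.prod_cons, Matrix.transpose_mul, ← Matrix.mulVec_mulVec]
      exact this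
  -- R is invariant under each A j and contains the ranges of the B i
  have hRB : ∀ (i : Fin M) (x : Fin m → ℝ), (B i).mulVec x ∈ R := by
    intro i x
    rw [hR]
    apply Submodule.mem_iSup_of_mem ([] : List (Matrix (Fin n) (Fin n) ℝ))
    apply Submodule.mem_iSup_of_mem (by simp : ∀ X ∈ ([] : List (Matrix (Fin n) (Fin n) ℝ)),
      X ∈ Set.range A)
    apply Submodule.mem_iSup_of_mem i
    exact ⟨x, by rw [Matrix.mulVecLin_apply, List.prod_nil, Matrix.one_mul]⟩
  have hRA : ∀ (j : Fin M) (v : Fin n → ℝ), v ∈ R → (A j).mulVec v ∈ R := by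
    intro j
    have H : R ≤ Submodule.comap ((A j).mulVecLin) R := by
      nth_rewrite 1 [hR]
      apply iSup_le; intro Lst
      apply iSup_le; intro hLst
      apply iSup_le; intro i
      rintro v ⟨u, rfl⟩
      simp only [Submodule.mem_comap, Matrix.mulVecLin_apply]
      rw [hR]
      apply Submodule.mem_iSup_of_mem (A j :: Lst)
      have hmem : ∀ X ∈ (A j :: Lst), X ∈ Set.range A := by
        intro X hX
        rcases List.mem_cons.mp hX with h | h
        · exact ⟨j, h.symm⟩
        · exact hLst X h
      apply Submodule.mem_iSup_of_mem hmem
      apply Submodule.mem_iSup_of_mem i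
      refine ⟨u, ?_⟩
      show ((A j :: Lst).prod * B i) *ᵥ u = A j *ᵥ ((Lst.prod * B i) *ᵥ u)
      rw [List.prod_cons, Matrix.mul_assoc, ← Matrix.mulVec_mulVec]
    intro v hv
    exact H hv
  have hRD : ∀ (j : Fin M) (v : Fin n → ℝ), v ∈ R → (D j).mulVec v ∈ R := by
    intro j v hv
    rw [hD j, Matrix.sub_mulVec]
    exact R.sub_mem (hRA j v hv) (hRA ⟨0, hM⟩ v hv)
  -- each P k has range inside R
  have hPR : ∀ k x, (P k).mulVec x ∈ R := by
    intro k
    induction k with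
    | zero =>
      refine solution_range hA hP1 R (hRA ⟨0, hM⟩) ?_
      intro x
      rw [RGERS.sum_mulVec]
      refine R.sum_mem fun i _ => ?_
      rw [← Matrix.mulVec_mulVec]
      exact hRB i _
    | succ k ih =>
      refine solution_range hA (hPk k) R (hRA ⟨0, hM⟩) ?_
      intro x
      rw [RGERS.sum_mulVec]
      refine R.sum_mem fun i _ => ?_
      rw [← Matrix.mulVec_mulVec, ← Matrix.mulVec_mulVec]
      exact hRD i _ (ih _)
  -- conclude
  apply le_antisymm
  · rintro v ⟨x, rfl⟩
    have hcl : IsClosed (R : Set (Fin n → ℝ)) := Submodule.closed_of_finiteDimensional R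
    rw [Matrix.mulVecLin_apply]
    exact hcl.mem_of_tendsto (hSx x)
      (Filter.Eventually.of_forall fun s => R.sum_mem fun k _ => hPR k x)
  · rw [hR]
    apply iSup_le; intro Lst
    apply iSup_le; intro hLst
    apply iSup_le; intro i
    rintro v ⟨u, rfl⟩
    rw [Matrix.mulVecLin_apply]
    refine range_le_of_ker hSsymm ?_ u
    intro x hx
    rw [Matrix.transpose_mul, ← Matrix.mulVec_mulVec]
    exact hKB _ (fun k => hKprod Lst hLst x (hKP x hx) k) i
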